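/- Let G be the simple graph on vertex set {a, b, c, d, e} with edge set {ab, ac, ae, be, ce, ad, de}. Then G is a connected even graph, and every cycle decomposition of G contains two distinct cycles that intersect in at least two vertices; that is, no cycle decomposition of G has a simple cycle intersection graph. -/

import Mathlib

open SimpleGraph

variable {V : Type*}

/-- A graph is *even* if every vertex has even degree. -/
def IsEvenGraph (G : SimpleGraph V) : Prop :=
  ∀ v : V, Even (G.neighborSet v).ncard

/-- A subgraph is a *cycle* if it is connected and every one of its vertices has degree 2. -/
def IsCycleSubgraph {G : SimpleGraph V} (H : G.Subgraph) : Prop :=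
  H.Connected ∧ ∀ v ∈ H.verts, (H.neighborSet v).ncard = 2

/-- A *cycle decomposition* of `G` is a family of cycle subgraphs such that every edge of `G`
lies in exactly one of them. -/
def IsCycleDecomposition (G : SimpleGraph V) (𝒞 : Set G.Subgraph) : Prop :=
  (∀ C ∈ 𝒞, IsCycleSubgraph C) ∧ ∀ e ∈ G.edgeSet, ∃! C, C ∈ 𝒞 ∧ e ∈ SimpleGraph.Subgraph.edgeSet C

/-- The edges of the cycle intersection *multigraph* of a cycle decomposition `𝒞`:
one edge joining `C` and `C'` for each pair of distinct cycles `C ≠ C'` of `𝒞` and each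
vertex `v` lying on both (the edge is labelled by `v`). -/
def CIEdges (G : SimpleGraph V) (𝒞 : Set G.Subgraph) : Set (Sym2 G.Subgraph × V) :=
  {p | ∃ C ∈ 𝒞, ∃ C' ∈ 𝒞, ∃ v : V, C ≠ C' ∧
    v ∈ C.verts ∩ SimpleGraph.Subgraph.verts C' ∧ p = (s(C, C'), v)}

/-- The underlying simple graph of the cycle intersection graph of a cycle decomposition:
two distinct cycles are adjacent iff they share a vertex. -/
def CIGraph (G : SimpleGraph V) (𝒞 : Set G.Subgraph) : SimpleGraph 𝒞 where
  Adj C D := C ≠ D ∧ ((C : G.Subgraph).verts ∩ (D : G.Subgraph).verts).Nonempty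
  symm := by
    refine ⟨?_⟩
    rintro C D ⟨h1, h2⟩
    exact ⟨h1.symm, by rwa [Set.inter_comm] at h2⟩
  loopless := by refine ⟨?_⟩; rintro C ⟨h1, _⟩; exact h1 rfl

/-- The cycle intersection graph is *simple* iff any two distinct cycles of the decomposition
intersect in at most one vertex. -/
def CISimple (G : SimpleGraph V) (𝒞 : Set G.Subgraph) : Prop :=
  ∀ C ∈ 𝒞, ∀ D ∈ 𝒞, C ≠ D →
    ((C : G.Subgraph).verts ∩ (D : G.Subgraph).verts).ncard ≤ 1

/-- `S` is a decycling set of `G` iff `G - S` is acyclic. -/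
def IsDecyclingSet (G : SimpleGraph V) (S : Set V) : Prop :=
  (G.induce Sᶜ).IsAcyclic

/-- The decycling number of `G`: the minimum size of a decycling set. -/
noncomputable def decyclingNumber (G : SimpleGraph V) : ℕ :=
  sInf {n | ∃ S : Set V, IsDecyclingSet G S ∧ S.ncard = n}

/-- The *size* of a spanning forest: its number of edges plus its number of isolated vertices. -/
noncomputable def forestSize {W : Type*} (F : SimpleGraph W) : ℕ :=
  F.edgeSet.ncard + {v : W | ∀ w, ¬ F.Adj v w}.ncard

/-- The minimum size of a spanning forest of `H` (a spanning forest is an acyclic spanning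
subgraph; note a subgraph `F ≤ H` on the same vertex type is automatically spanning). -/
noncomputable def MSF {W : Type*} (H : SimpleGraph W) : ℕ :=
  sInf {n | ∃ F ≤ H, F.IsAcyclic ∧ forestSize F = n}


set_option linter.unnecessarySeqFocus false
set_option linter.unreachableTactic false
set_option linter.unusedTactic false

def G10 : SimpleGraph (Fin 5) := SimpleGraph.fromEdgeSet
  {s(0, 1), s(0, 2), s(0, 4), s(1, 4), s(2, 4), s(0, 3), s(3, 4)}

lemma G10_adj : ∀ u v : Fin 5, G10.Adj u v ↔
    (u,v) ∈ ({(0,1),(1,0),(0,2),(2,0),(0,4),(4,0),(1,4),(4,1),(2,4),(4,2),(0,3),(3,0),(3,4),(4,3)} : Set (Fin 5 × Fin 5)) := by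
  intro u v
  simp only [G10, SimpleGraph.fromEdgeSet_adj, Set.mem_insert_iff, Set.mem_singleton_iff, Sym2.eq_iff]
  fin_cases u <;> fin_cases v <;> simp <;> decide

lemma G10_nbr : ∀ x : Fin 5, (x = 1 ∨ x = 2 ∨ x = 3) →
    G10.neighborSet x = {0, 4} := by
  intro x hx
  ext w
  rw [SimpleGraph.mem_neighborSet, G10_adj]
  rcases hx with h | h | h <;> subst h <;> fin_cases w <;> simp <;> decide

lemma G10_adj0 : ∀ v : Fin 5, v ≠ 0 → G10.Adj 0 v := by
  intro v hv
  rw [G10_adj]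
  fin_cases v <;> simp_all <;> decide

lemma G10_connected : G10.Connected := by
  have h : ∀ w : Fin 5, G10.Reachable 0 w := by
    intro w
    by_cases hw : w = 0
    · subst hw; exact Reachable.refl _
    · exact (G10_adj0 w hw).reachable
  exact ⟨fun u v => (h u).symm.trans (h v)⟩

lemma G10_even : IsEvenGraph G10 := by
  intro v
  fin_cases v
  · show Even (G10.neighborSet 0).ncard
    have h : G10.neighborSet 0 = ↑({1,2,3,4} : Finset (Fin 5)) := by
      ext w; rw [SimpleGraph.mem_neighborSet, G10_adj]; fin_cases w <;> simp <;> decide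
    rw [h, Set.ncard_coe_finset]; decide
  · show Even (G10.neighborSet 1).ncard
    rw [G10_nbr 1 (by simp), Set.ncard_pair (by decide : (0:Fin 5) ≠ 4)]; decide
  · show Even (G10.neighborSet 2).ncard
    rw [G10_nbr 2 (by simp), Set.ncard_pair (by decide : (0:Fin 5) ≠ 4)]; decide
  · show Even (G10.neighborSet 3).ncard
    rw [G10_nbr 3 (by simp), Set.ncard_pair (by decide : (0:Fin 5) ≠ 4)]; decide
  · show Even (G10.neighborSet 4).ncard
    have h : G10.neighborSet 4 = ↑({0,1,2,3} : Finset (Fin 5)) := by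
      ext w; rw [SimpleGraph.mem_neighborSet, G10_adj]; fin_cases w <;> simp <;> decide
    rw [h, Set.ncard_coe_finset]; decide

/-- every cycle subgraph of G10 contains vertices 0 and 4 -/
lemma cycle_mem (C : G10.Subgraph) (hC : IsCycleSubgraph C) :
    (0 : Fin 5) ∈ C.verts ∧ (4 : Fin 5) ∈ C.verts := by
  obtain ⟨hconn, hdeg⟩ := hC
  have hx : ∃ x ∈ C.verts, x = 1 ∨ x = 2 ∨ x = 3 := by
    by_contra h
    push_neg at h
    obtain ⟨v, hv⟩ := hconn.nonempty
    have hvo : v = 0 ∨ v = 4 := by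
      have := h v hv
      fin_cases v <;> simp_all
    have hsub : C.neighborSet v ⊆ {if v = 0 then (4 : Fin 5) else 0} := by
      intro w hw
      have hwv : w ∈ C.verts := (hw : C.Adj v w).snd_mem
      have hne : v ≠ w := (hw : C.Adj v w).ne
      have hwo := h w hwv
      rcases hvo with h0 | h4 <;> subst_vars <;> fin_cases w <;> simp_all <;> decide
    have hle : (C.neighborSet v).ncard ≤ 1 := by
      calc (C.neighborSet v).ncard ≤ ({if v = 0 then (4 : Fin 5) else 0} : Set (Fin 5)).ncard :=
            Set.ncard_le_ncard hsub (Set.toFinite _)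
        _ = 1 := Set.ncard_singleton _
    rw [hdeg v hv] at hle
    omega
  obtain ⟨x, hxC, hx123⟩ := hx
  have hsub : C.neighborSet x ⊆ ({0, 4} : Set (Fin 5)) := by
    rw [← G10_nbr x hx123]; exact C.neighborSet_subset x
  have heq : C.neighborSet x = ({0, 4} : Set (Fin 5)) := by
    apply Set.eq_of_subset_of_ncard_le hsub _ (Set.toFinite _)
    rw [hdeg x hxC, Set.ncard_pair (by decide : (0:Fin 5) ≠ 4)]
  have h0 : C.Adj x 0 := by
    have : (0 : Fin 5) ∈ C.neighborSet x := by rw [heq]; simp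
    exact this
  have h4 : C.Adj x 4 := by
    have : (4 : Fin 5) ∈ C.neighborSet x := by rw [heq]; simp
    exact this
  exact ⟨h0.snd_mem, h4.snd_mem⟩

/-- The simple graph on vertices `{a, b, c, d, e} = {0, 1, 2, 3, 4}` with
edge set `{ab, ac, ae, be, ce, ad, de}` is a connected even graph, yet every cycle
decomposition of it contains two distinct cycles intersecting in at least two vertices;
i.e. no cycle decomposition of it has a simple cycle intersection graph. -/
theorem exists_evenGraph_no_simple_CI :
    let G : SimpleGraph (Fin 5) := SimpleGraph.fromEdgeSet
      {s(0, 1), s(0, 2), s(0, 4), s(1, 4), s(2, 4), s(0, 3), s(3, 4)}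
    G.Connected ∧ IsEvenGraph G ∧
      ∀ 𝒞 : Set G.Subgraph, IsCycleDecomposition G 𝒞 →
        ∃ C ∈ 𝒞, ∃ D ∈ 𝒞, C ≠ D ∧
          2 ≤ ((C : G.Subgraph).verts ∩ (D : G.Subgraph).verts).ncard := by
  
  intro G
  refine ⟨G10_connected, G10_even, ?_⟩
  intro 𝒞 hdec
  obtain ⟨hcyc, hcov⟩ := hdec
  have he01 : s((0:Fin 5), 1) ∈ G10.edgeSet := (G10_adj 0 1).mpr (by simp)
  obtain ⟨C, ⟨hC𝒞, hCe⟩, -⟩ := hcov _ he01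
  have hC := hcyc C hC𝒞
  have hadjC : C.Adj 0 1 := hCe
  have h0C : (0 : Fin 5) ∈ C.verts := hadjC.fst_mem
  have hNcard : (C.neighborSet 0).ncard = 2 := hC.2 0 h0C
  have h1N : (1 : Fin 5) ∈ C.neighborSet 0 := hadjC
  have hnot : ¬((2:Fin 5) ∈ C.neighborSet 0 ∧ (3:Fin 5) ∈ C.neighborSet 0) := by
    rintro ⟨h2, h3⟩
    have hsub : ({1,2,3} : Set (Fin 5)) ⊆ C.neighborSet 0 := by
      intro w hw
      rcases hw with h | h | h <;> subst_vars <;> assumption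
    have hle := Set.ncard_le_ncard hsub (Set.toFinite _)
    have h123 : ({1,2,3} : Set (Fin 5)).ncard = 3 := by
      rw [show ({1,2,3} : Set (Fin 5)) = ↑({1,2,3} : Finset (Fin 5)) by simp,
        Set.ncard_coe_finset]
      decide
    rw [hNcard, h123] at hle
    omega
  have hy : ∃ y : Fin 5, y ∉ C.neighborSet 0 ∧ G10.Adj 0 y := by
    by_cases h2 : (2:Fin 5) ∈ C.neighborSet 0
    · exact ⟨3, fun h3 => hnot ⟨h2, h3⟩, (G10_adj 0 3).mpr (by simp)⟩
    · exact ⟨2, h2, (G10_adj 0 2).mpr (by simp)⟩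
  obtain ⟨y, hyN, hyG⟩ := hy
  obtain ⟨D, ⟨hD𝒞, hDe⟩, -⟩ := hcov _ (G10.mem_edgeSet.mpr hyG)
  have hD := hcyc D hD𝒞
  have hCD : C ≠ D := by
    rintro rfl
    exact hyN (SimpleGraph.Subgraph.mem_edgeSet.mp hDe)
  refine ⟨C, hC𝒞, D, hD𝒞, hCD, ?_⟩
  obtain ⟨hC0, hC4⟩ := cycle_mem C hC
  obtain ⟨hD0, hD4⟩ := cycle_mem D hD
  have hsub : ({0, 4} : Set (Fin 5)) ⊆ C.verts ∩ D.verts := by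
    intro w hw
    rcases hw with h | h <;> subst_vars <;> exact ⟨by assumption, by assumption⟩
  calc 2 = ({0, 4} : Set (Fin 5)).ncard := (Set.ncard_pair (by decide : (0:Fin 5) ≠ 4)).symm
    _ ≤ _ := Set.ncard_le_ncard hsub (Set.toFinite _)
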